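/- Let z̃ : [0, ∞) → [0, ∞) be the function with z̃(0) = 0 and, for r > 0, z̃(r) equal to the unique z > 0 satisfying z(exp(z) − 1)/(exp(z) − z − 1) = 2 + r. Then z̃(r) = 3r + O(r²) as r → 0+, i.e. the function r ↦ z̃(r) − 3r is O(r²) as r → 0 within [0, ∞). -/

import Mathlib

open Real Filter Set Topology Asymptotics

lemma ks_aux_nonneg (f f' : ℝ → ℝ) (hd : ∀ x, HasDerivAt f (f' x) x)
    (hf0 : f 0 = 0) (hf' : ∀ x, 0 ≤ x → 0 ≤ f' x) {x : ℝ} (hx : 0 ≤ x) : 0 ≤ f x := by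
  have hmono : MonotoneOn f (Set.Ici 0) := by
    apply monotoneOn_of_deriv_nonneg (convex_Ici 0)
    · exact fun y _ => (hd y).differentiableAt.continuousAt.continuousWithinAt
    · exact fun y _ => (hd y).differentiableAt.differentiableWithinAt
    · intro y hy
      rw [(hd y).deriv]
      exact hf' y (le_of_lt (by simpa using hy))
  calc (0:ℝ) = f 0 := hf0.symm
  _ ≤ f x := hmono (Set.mem_Ici.mpr (le_refl 0)) hx hx

lemma ks_h2 : ∀ x : ℝ, 0 ≤ x → 0 ≤ (x - 1) * Real.exp x + 1 := by
  apply ks_aux_nonneg _ (fun x => x * Real.exp x)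
  · intro x
    have h := (((hasDerivAt_id x).sub_const 1).mul (Real.hasDerivAt_exp x)).add_const 1
    refine h.congr_deriv ?_
    simp only [id_eq]; ring
  · simp
  · intro x hx; positivity

lemma ks_h1 : ∀ x : ℝ, 0 ≤ x → 0 ≤ (x - 2) * Real.exp x + x + 2 := by
  apply ks_aux_nonneg _ (fun x => (x - 1) * Real.exp x + 1)
  · intro x
    have h := ((((hasDerivAt_id x).sub_const 2).mul (Real.hasDerivAt_exp x)).add
      (hasDerivAt_id x)).add_const 2
    refine h.congr_deriv ?_
    simp only [id_eq]; ring
  · simp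
  · exact ks_h2

lemma ks_hA : ∀ x : ℝ, 0 ≤ x → 0 ≤ (x - 3) * Real.exp x + x ^ 2 / 2 + 2 * x + 3 := by
  apply ks_aux_nonneg _ (fun x => (x - 2) * Real.exp x + x + 2)
  · intro x
    have h := ((((((hasDerivAt_id x).sub_const 3).mul (Real.hasDerivAt_exp x)).add
      (((hasDerivAt_id x).pow 2).div_const 2)).add
      ((hasDerivAt_id x).const_mul 2)).add_const 3)
    refine h.congr_deriv ?_
    simp only [id_eq]; norm_num; ring
  · simp
  · exact ks_h1

lemma ks_k2 : ∀ x : ℝ, 0 ≤ x →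
    0 ≤ (x ^ 2 + 10 / 3 * x + 8 / 3) * Real.exp x - 6 * x - 8 / 3 := by
  apply ks_aux_nonneg _ (fun x => (x ^ 2 + 16 / 3 * x + 6) * Real.exp x - 6)
  · intro x
    have h := (((((hasDerivAt_id x).pow 2).add (((hasDerivAt_id x).const_mul (10/3)))).add_const
      (8/3)).mul (Real.hasDerivAt_exp x)).sub ((hasDerivAt_id x).const_mul 6) |>.sub_const (8/3)
    refine h.congr_deriv ?_
    simp only [id_eq]; norm_num; ring
  · simp
  · intro x hx
    have h1 : (1:ℝ) ≤ Real.exp x := Real.one_le_exp hx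
    nlinarith [sq_nonneg x]

lemma ks_k1 : ∀ x : ℝ, 0 ≤ x →
    0 ≤ (x ^ 2 + 4 / 3 * x + 4 / 3) * Real.exp x - 3 * x ^ 2 - 8 / 3 * x - 4 / 3 := by
  apply ks_aux_nonneg _ (fun x => (x ^ 2 + 10 / 3 * x + 8 / 3) * Real.exp x - 6 * x - 8 / 3)
  · intro x
    have h := ((((((hasDerivAt_id x).pow 2).add (((hasDerivAt_id x).const_mul (4/3)))).add_const
      (4/3)).mul (Real.hasDerivAt_exp x)).sub (((hasDerivAt_id x).pow 2).const_mul 3)).sub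
      ((hasDerivAt_id x).const_mul (8/3)) |>.sub_const (4/3)
    refine h.congr_deriv ?_
    simp only [id_eq]; norm_num; ring
  · simp
  · exact ks_k2

lemma ks_kB : ∀ x : ℝ, 0 ≤ x →
    0 ≤ (x ^ 2 - 2 / 3 * x + 2) * Real.exp x - x ^ 3 - 4 / 3 * x ^ 2 - 4 / 3 * x - 2 := by
  apply ks_aux_nonneg _
    (fun x => (x ^ 2 + 4 / 3 * x + 4 / 3) * Real.exp x - 3 * x ^ 2 - 8 / 3 * x - 4 / 3)
  · intro x
    have h := (((((((hasDerivAt_id x).pow 2).sub (((hasDerivAt_id x).const_mul (2/3)))).add_const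
      2).mul (Real.hasDerivAt_exp x)).sub ((hasDerivAt_id x).pow 3)).sub
      (((hasDerivAt_id x).pow 2).const_mul (4/3))).sub
      ((hasDerivAt_id x).const_mul (4/3)) |>.sub_const 2
    refine h.congr_deriv ?_
    simp only [id_eq]; norm_num; ring
  · simp
  · exact ks_k1

/-- Let `z̃ : [0,∞) → [0,∞)` be the function with `z̃ 0 = 0` and, for
`r > 0`, `z̃ r` the unique `z > 0` with `z (exp z - 1)/(exp z - z - 1) = 2 + r`.
Then `z̃ r = 3 r + O(r²)` as `r → 0` within `[0, ∞)`. -/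
theorem karpSipser_ztilde_expansion (ztilde : ℝ → ℝ) (h0 : ztilde 0 = 0)
    (hz : ∀ r : ℝ, 0 < r → 0 < ztilde r ∧
      ztilde r * (Real.exp (ztilde r) - 1) / (Real.exp (ztilde r) - ztilde r - 1) = 2 + r) :
    (fun r : ℝ => ztilde r - 3 * r) =O[𝓝[≥] (0 : ℝ)] (fun r : ℝ => r ^ 2) := by
  rw [Asymptotics.isBigO_iff]
  refine ⟨27, ?_⟩
  filter_upwards [self_mem_nhdsWithin] with r hr
  rcases eq_or_lt_of_le (Set.mem_Ici.mp hr) with h | h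
  · simp [← h, h0]
  · obtain ⟨hzpos, heq⟩ := hz r h
    set z := ztilde r with hzdef
    set E := Real.exp z with hEdef
    have hD : 0 < E - z - 1 := by
      have := Real.add_one_lt_exp (ne_of_gt hzpos)
      linarith
    have heq' : z * (E - 1) = (2 + r) * (E - z - 1) := by
      field_simp at heq
      linarith [heq]
    -- upper bound: z ≤ 3r
    have hA := ks_hA z hzpos.le
    have hub : z ≤ 3 * r := by
      have key : (3 * r - z) * (E - z - 1) =
          2 * ((z - 3) * E + z ^ 2 / 2 + 2 * z + 3) := by
        linear_combination -3 * heq'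
      nlinarith [key, hD, hA]
    -- lower bound: 3r ≤ z + 3z^2
    have hB := ks_kB z hzpos.le
    have hlb : 3 * r ≤ z + 3 * z ^ 2 := by
      have key : (z + 3 * z ^ 2 - 3 * r) * (E - z - 1) =
          3 * ((z ^ 2 - 2 / 3 * z + 2) * E - z ^ 3 - 4 / 3 * z ^ 2 - 4 / 3 * z - 2) := by
        linear_combination 3 * heq'
      nlinarith [key, hD, hB]
    have hzr : z ^ 2 ≤ 9 * r ^ 2 := by nlinarith
    have habs : |z - 3 * r| ≤ 27 * r ^ 2 := by
      rw [abs_le]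
      constructor <;> nlinarith
    calc ‖z - 3 * r‖ = |z - 3 * r| := rfl
    _ ≤ 27 * r ^ 2 := habs
    _ = 27 * ‖r ^ 2‖ := by rw [Real.norm_eq_abs, abs_of_nonneg (sq_nonneg r)]
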